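/- Let G ≥ 1, γ > 0, and A_1, …, A_G > 0 (groups indexed in decoding order, group g decoded before group j for g < j). Define S_{G+1} = 0 and, recursively for g = G down to 1, S_g = γ/A_g + (1+γ)·S_{g+1}, and set P_g = S_g − S_{g+1}. Then (i) each P_g > 0, (ii) for every g, the SINR constraint holds with equality: P_g·A_g / (1 + A_g·∑_{j=g+1}^G P_j) = γ, and (iii) the total power satisfies S_1 = ∑_{g=1}^G P_g = ∑_{g=1}^G γ·(1+γ)^{g−1} / A_g. -/

import Mathlib

/-- NOMA recursive power construction: the powers `P g = S g − S (g+1)` defined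
by the backward recursion `S g = γ/A g + (1+γ)·S (g+1)` (with `S (G+1) = 0`)
are positive, meet every SINR constraint with equality, and sum to
`S 1 = ∑_{g=1}^G γ·(1+γ)^{g−1}/A g`. -/
theorem noma_recursive_power_allocation
    (G : ℕ) (hG : 1 ≤ G) (γ : ℝ) (hγ : 0 < γ)
    (A : ℕ → ℝ) (hA : ∀ g, 1 ≤ g → g ≤ G → 0 < A g)
    (S : ℕ → ℝ) (hSend : S (G + 1) = 0)
    (hSrec : ∀ g, 1 ≤ g → g ≤ G → S g = γ / A g + (1 + γ) * S (g + 1))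
    (P : ℕ → ℝ) (hP : ∀ g, P g = S g - S (g + 1)) :
    (∀ g ∈ Finset.Icc 1 G, 0 < P g) ∧
    (∀ g ∈ Finset.Icc 1 G,
      P g * A g / (1 + A g * ∑ j ∈ Finset.Icc (g + 1) G, P j) = γ) ∧
    S 1 = ∑ g ∈ Finset.Icc 1 G, P g ∧
    S 1 = ∑ g ∈ Finset.Icc 1 G, γ * (1 + γ) ^ (g - 1) / A g := by
  -- closed form for S g
  have key : ∀ n g, g + n = G + 1 → 1 ≤ g →
      S g = ∑ j ∈ Finset.Icc g G, γ * (1 + γ) ^ (j - g) / A j := by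
    intro n
    induction n with
    | zero =>
      intro g hg _
      have : g = G + 1 := by omega
      subst this
      rw [Finset.Icc_eq_empty (by omega)]
      simpa using hSend
    | succ n ih =>
      intro g hg hg1
      have hgG : g ≤ G := by omega
      have hins : Finset.Icc g G = insert g (Finset.Icc (g + 1) G) := by
        ext x; simp [Finset.mem_Icc]; omega
      rw [hSrec g hg1 hgG, ih (g + 1) (by omega) (by omega), hins,
        Finset.sum_insert (by simp), Finset.mul_sum]
      have h0 : γ * (1 + γ) ^ (g - g) / A g = γ / A g := by simp
      rw [h0]
      congr 1
      apply Finset.sum_congr rfl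
      intro j hj
      simp only [Finset.mem_Icc] at hj
      have : j - g = (j - (g + 1)) + 1 := by omega
      rw [this, pow_succ]
      ring
  -- nonnegativity of S (g+1) for 1 ≤ g ≤ G
  have hSnn : ∀ g, 1 ≤ g → g ≤ G → 0 ≤ S (g + 1) := by
    intro g hg1 hgG
    rw [key (G - g) (g + 1) (by omega) (by omega)]
    apply Finset.sum_nonneg
    intro j hj
    simp only [Finset.mem_Icc] at hj
    have hAj := hA j (by omega) hj.2
    positivity
  -- telescoping
  have htel : ∀ n g, g + n = G + 1 → ∑ j ∈ Finset.Icc g G, P j = S g := by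
    intro n
    induction n with
    | zero =>
      intro g hg
      have : g = G + 1 := by omega
      subst this
      rw [Finset.Icc_eq_empty (by omega)]
      simpa using hSend.symm
    | succ n ih =>
      intro g hg
      have hins : Finset.Icc g G = insert g (Finset.Icc (g + 1) G) := by
        ext x; simp [Finset.mem_Icc]; omega
      rw [hins, Finset.sum_insert (by simp), ih (g + 1) (by omega), hP g]
      ring
  -- P g formula
  have hPpos : ∀ g, 1 ≤ g → g ≤ G → P g = γ / A g + γ * S (g + 1) := by
    intro g h1 h2
    rw [hP g, hSrec g h1 h2]; ring
  refine ⟨?_, ?_, ?_, ?_⟩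
  · intro g hg
    simp only [Finset.mem_Icc] at hg
    have hAg := hA g hg.1 hg.2
    have hSg := hSnn g hg.1 hg.2
    rw [hPpos g hg.1 hg.2]
    have : 0 < γ / A g := by positivity
    nlinarith
  · intro g hg
    simp only [Finset.mem_Icc] at hg
    have hAg := hA g hg.1 hg.2
    have hSg := hSnn g hg.1 hg.2
    rw [htel (G - g) (g + 1) (by omega), hPpos g hg.1 hg.2]
    have hden : 0 < 1 + A g * S (g + 1) := by nlinarith
    field_simp
  · exact (htel G 1 (by omega)).symm
  · have := key G 1 (by omega) le_rfl
    simpa using this
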